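/- Let ω_max, k, T > 0 and μ ∈ (0,1). Let ω : ℝ → ℝ³ be continuous with |ω(t)| ≤ ω_max, and a : ℝ → ℝ³ differentiable with |a(t)| = 1, a'(t) = a(t) × ω(t), satisfying the PE condition with parameters (T, μ). Let A(t) = [[−I, [a(t)]ₓ],[[a(t)]ₓ, 0]] and let c ∈ (0,1) be a constant such that all solutions of Z' = k·A(t)·Z satisfy |Z(t)|² ≤ c^N·|Z(t₀)|² for t ∈ [t₀+N·T, t₀+(N+1)·T]. Then for every t₀ ∈ ℝ and every Z₀ ∈ ℝ⁶, the solution Z of Z'(τ) = k·A(τ)·Z(τ) with Z(t₀) = Z₀ satisfies (1/(2k√3))·|Z₀|² ≤ ∫_{t₀}^{∞} |Z(τ)|² dτ ≤ (T/(1−c))·|Z₀|². -/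

import Mathlib

open Matrix MeasureTheory intervalIntegral

noncomputable section

attribute [local instance] Matrix.normedAddCommGroup Matrix.normedSpace

/-- Cross product on ℝ³. -/
def cross3 (x y : Fin 3 → ℝ) : Fin 3 → ℝ :=
  ![x 1 * y 2 - x 2 * y 1, x 2 * y 0 - x 0 * y 2, x 0 * y 1 - x 1 * y 0]

/-- Euclidean norm on ℝ³. -/
def enorm3 (x : Fin 3 → ℝ) : ℝ := Real.sqrt (∑ i, (x i) ^ 2)

/-- Skew-symmetric cross-product matrix `[x]ₓ`. -/
def skew3 (x : Fin 3 → ℝ) : Matrix (Fin 3) (Fin 3) ℝ :=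
  !![0, -x 2, x 1; x 2, 0, -x 0; -x 1, x 0, 0]

/-- Persistent excitation condition with parameters `T, μ`. -/
def PE (a : ℝ → Fin 3 → ℝ) (T μ : ℝ) : Prop :=
  ∀ t : ℝ,
    ((T⁻¹ • ∫ τ in t..(t + T), (skew3 (a τ))ᵀ * skew3 (a τ)) -
      μ • (1 : Matrix (Fin 3) (Fin 3) ℝ)).PosSemidef

/-- Squared Euclidean norm on ℝ⁶ = ℝ³ × ℝ³. -/
def nrm6sq (Z : Fin 3 ⊕ Fin 3 → ℝ) : ℝ := ∑ i, (Z i) ^ 2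

/-- The 6×6 block matrix `A = [[−I, [a]ₓ], [[a]ₓ, 0]]`. -/
def Amat (a : Fin 3 → ℝ) : Matrix (Fin 3 ⊕ Fin 3) (Fin 3 ⊕ Fin 3) ℝ :=
  Matrix.fromBlocks (-1) (skew3 a) (skew3 a) 0

/-- two-sided bound on the energy integral of solutions of the LTV
system `Z' = k A(t) Z` under persistent excitation. -/
theorem ltv_energy_integral_bounds
    (ωmax k T μ : ℝ) (hωmax : 0 < ωmax) (hk : 0 < k) (hT : 0 < T)
    (hμ0 : 0 < μ) (hμ1 : μ < 1)
    (ω : ℝ → Fin 3 → ℝ) (hωc : Continuous ω) (hωb : ∀ t, enorm3 (ω t) ≤ ωmax)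
    (a : ℝ → Fin 3 → ℝ) (hau : ∀ t, enorm3 (a t) = 1)
    (had : ∀ t, HasDerivAt a (cross3 (a t) (ω t)) t)
    (hPE : PE a T μ)
    (c : ℝ) (hc0 : 0 < c) (hc1 : c < 1)
    (hdecay : ∀ Z : ℝ → Fin 3 ⊕ Fin 3 → ℝ,
      (∀ t, HasDerivAt Z (k • (Amat (a t)).mulVec (Z t)) t) →
      ∀ (t₀ : ℝ) (N : ℕ), ∀ t ∈ Set.Icc (t₀ + N * T) (t₀ + (N + 1) * T),
        nrm6sq (Z t) ≤ c ^ N * nrm6sq (Z t₀)) :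
    ∀ (t₀ : ℝ) (Z₀ : Fin 3 ⊕ Fin 3 → ℝ) (Z : ℝ → Fin 3 ⊕ Fin 3 → ℝ),
      (∀ t, HasDerivAt Z (k • (Amat (a t)).mulVec (Z t)) t) → Z t₀ = Z₀ →
      (1 / (2 * k * Real.sqrt 3)) * nrm6sq Z₀ ≤ (∫ τ in Set.Ioi t₀, nrm6sq (Z τ)) ∧
      (∫ τ in Set.Ioi t₀, nrm6sq (Z τ)) ≤ (T / (1 - c)) * nrm6sq Z₀ := by
  intro t₀ Z₀ Z hZ hZ0
  subst hZ0
  set F : ℝ → ℝ := fun t => nrm6sq (Z t) with hFdef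
  set L : ℝ → ℝ := fun t => ∑ j : Fin 3, (Z t (Sum.inl j))^2 with hLdef
  have hLnn : ∀ t, 0 ≤ L t := fun t => Finset.sum_nonneg fun j _ => sq_nonneg _
  have hFnn : ∀ t, 0 ≤ F t := fun t => Finset.sum_nonneg fun i _ => sq_nonneg _
  have hLF : ∀ t, L t ≤ F t := by
    intro t
    have h1 : F t = L t + ∑ j : Fin 3, (Z t (Sum.inr j))^2 := by
      simp [hFdef, hLdef, nrm6sq, Fintype.sum_sum_type]
    have h2 : (0:ℝ) ≤ ∑ j : Fin 3, (Z t (Sum.inr j))^2 :=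
      Finset.sum_nonneg fun j _ => sq_nonneg _
    linarith
  -- component derivatives
  have hZi : ∀ (t : ℝ) (i : Fin 3 ⊕ Fin 3),
      HasDerivAt (fun t => Z t i) ((k • (Amat (a t)).mulVec (Z t)) i) t := by
    intro t i
    have h := ((ContinuousLinearMap.proj (R := ℝ)
      (φ := fun _ : Fin 3 ⊕ Fin 3 => ℝ) i).hasFDerivAt.comp
      t (hZ t).hasFDerivAt).hasDerivAt
    simpa [Function.comp_def] using h
  -- derivative of F
  have hF' : ∀ t, HasDerivAt F (-(2*k) * L t) t := by
    intro t
    have h := HasDerivAt.sum (𝕜 := ℝ) (u := (Finset.univ : Finset (Fin 3 ⊕ Fin 3)))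
      (A := fun i t => (Z t i)^2)
      (A' := fun i => 2 * Z t i ^ 1 * ((k • (Amat (a t)).mulVec (Z t)) i))
      (fun i _ => (hZi t i).pow 2)
    have he : ∑ i, 2 * Z t i ^ 1 * ((k • (Amat (a t)).mulVec (Z t)) i)
        = -(2*k) * L t := by
      simp only [hLdef]
      simp [Amat, skew3, Matrix.mulVec, dotProduct, Fintype.sum_sum_type,
        Fin.sum_univ_three, Matrix.fromBlocks]
      ring
    rw [he] at h
    exact h
  -- continuity of F
  have hZc : Continuous Z := by
    rw [continuous_iff_continuousAt]; exact fun t => (hZ t).continuousAt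
  have hFc : Continuous F := by
    apply continuous_finset_sum
    intro i _
    exact ((continuous_apply i).comp hZc).pow 2
  have hk2 : (0:ℝ) < 2 * k := by linarith
  -- Gronwall-type lower bound
  have hG : ∀ t, HasDerivAt (fun t => Real.exp (2*k*t) * F t)
      (Real.exp (2*k*t) * (2*k) * F t + Real.exp (2*k*t) * (-(2*k) * L t)) t := by
    intro t
    have h := (((hasDerivAt_id t).const_mul (2*k)).exp.mul (hF' t))
    exact h.congr_deriv (by simp only [id, mul_one])
  have hGmono : Monotone (fun t => Real.exp (2*k*t) * F t) := by
    apply monotone_of_deriv_nonneg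
    · exact fun t => (hG t).differentiableAt
    · intro t
      rw [(hG t).deriv]
      have h1 : 0 < Real.exp (2*k*t) := Real.exp_pos _
      nlinarith [mul_le_mul_of_nonneg_left (hLF t) (mul_nonneg h1.le hk2.le), hLnn t]
  have hlow : ∀ t, t₀ ≤ t → F t₀ * Real.exp (-(2*k)*(t - t₀)) ≤ F t := by
    intro t ht
    have h := hGmono ht
    have hee : Real.exp (-(2*k*t)) * Real.exp (2*k*t₀) = Real.exp (-(2*k)*(t-t₀)) := by
      rw [← Real.exp_add]; congr 1; ring
    calc F t₀ * Real.exp (-(2*k)*(t - t₀))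
        = Real.exp (-(2*k*t)) * (Real.exp (2*k*t₀) * F t₀) := by
          rw [← hee]; ring
      _ ≤ Real.exp (-(2*k*t)) * (Real.exp (2*k*t) * F t) :=
          mul_le_mul_of_nonneg_left h (Real.exp_pos _).le
      _ = F t := by
          rw [← mul_assoc, ← Real.exp_add]; simp
  -- covering intervals
  set S : ℕ → Set ℝ := fun n => Set.Ico (t₀ + n*T) (t₀ + (n+1)*T) with hSdef
  have hUnion : (⋃ n, S n) = Set.Ici t₀ := by
    ext t
    simp only [hSdef, Set.mem_iUnion, Set.mem_Ico, Set.mem_Ici]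
    constructor
    · rintro ⟨n, h1, h2⟩
      have : (0:ℝ) ≤ (n:ℝ) * T := by positivity
      linarith
    · intro ht
      refine ⟨⌊(t - t₀)/T⌋₊, ?_, ?_⟩
      · have h1 : (⌊(t - t₀)/T⌋₊ : ℝ) ≤ (t - t₀)/T :=
          Nat.floor_le (div_nonneg (by linarith) hT.le)
        have h2 := (le_div_iff₀ hT).mp h1
        linarith
      · have h1 : (t - t₀)/T < (⌊(t - t₀)/T⌋₊ : ℝ) + 1 := Nat.lt_floor_add_one _
        have h2 := (div_lt_iff₀ hT).mp h1
        push_cast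
        linarith
  have hDisj : Pairwise (Function.onFun Disjoint S) := by
    intro m n hmn
    simp only [Function.onFun, hSdef]
    rw [Set.Ico_disjoint_Ico]
    rcases lt_or_gt_of_ne hmn with h | h
    · have hm1 : ((m:ℝ)+1) ≤ (n:ℝ) := by exact_mod_cast h
      calc min (t₀ + ((m:ℝ)+1)*T) (t₀ + ((n:ℝ)+1)*T)
          ≤ t₀ + ((m:ℝ)+1)*T := min_le_left _ _
        _ ≤ t₀ + (n:ℝ)*T := by nlinarith
        _ ≤ max (t₀ + (m:ℝ)*T) (t₀ + (n:ℝ)*T) := le_max_right _ _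
    · have hm1 : ((n:ℝ)+1) ≤ (m:ℝ) := by exact_mod_cast h
      calc min (t₀ + ((m:ℝ)+1)*T) (t₀ + ((n:ℝ)+1)*T)
          ≤ t₀ + ((n:ℝ)+1)*T := min_le_right _ _
        _ ≤ t₀ + (m:ℝ)*T := by nlinarith
        _ ≤ max (t₀ + (m:ℝ)*T) (t₀ + (n:ℝ)*T) := le_max_left _ _
  have hpiece : ∀ n : ℕ, ∀ t ∈ S n, F t ≤ c^n * F t₀ := by
    intro n t ht
    exact hdecay Z hZ t₀ n t ⟨ht.1, ht.2.le⟩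
  have hc1' : (0:ℝ) < 1 - c := by linarith
  -- lintegral bound over Ici
  have key : ∫⁻ t in Set.Ici t₀, ENNReal.ofReal (F t)
      ≤ ENNReal.ofReal (T/(1-c) * F t₀) := by
    rw [← hUnion, lintegral_iUnion (fun n => measurableSet_Ico) hDisj]
    have step1 : ∀ n : ℕ, ∫⁻ t in S n, ENNReal.ofReal (F t)
        ≤ (ENNReal.ofReal c)^n * ENNReal.ofReal (F t₀ * T) := by
      intro n
      calc ∫⁻ t in S n, ENNReal.ofReal (F t)
          ≤ ∫⁻ _ in S n, ENNReal.ofReal (c^n * F t₀) := by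
            apply setLIntegral_mono measurable_const
            exact fun t ht => ENNReal.ofReal_le_ofReal (hpiece n t ht)
        _ = ENNReal.ofReal (c^n * F t₀) * volume (S n) := setLIntegral_const _ _
        _ = (ENNReal.ofReal c)^n * ENNReal.ofReal (F t₀ * T) := by
            rw [hSdef]
            simp only [Real.volume_Ico]
            rw [show t₀ + ((n:ℝ)+1)*T - (t₀ + (n:ℝ)*T) = T by ring]
            rw [← ENNReal.ofReal_mul (mul_nonneg (pow_nonneg hc0.le n) (hFnn t₀)),
              ← ENNReal.ofReal_pow hc0.le,
              ← ENNReal.ofReal_mul (pow_nonneg hc0.le n)]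
            congr 1
            ring
    calc ∑' n, ∫⁻ t in S n, ENNReal.ofReal (F t)
        ≤ ∑' n : ℕ, (ENNReal.ofReal c)^n * ENNReal.ofReal (F t₀ * T) :=
          ENNReal.tsum_le_tsum step1
      _ = (1 - ENNReal.ofReal c)⁻¹ * ENNReal.ofReal (F t₀ * T) := by
          rw [ENNReal.tsum_mul_right, ENNReal.tsum_geometric]
      _ = ENNReal.ofReal (T/(1-c) * F t₀) := by
          have h1c : (1 : ENNReal) - ENNReal.ofReal c = ENNReal.ofReal (1 - c) := by
            rw [ENNReal.ofReal_sub _ hc0.le, ENNReal.ofReal_one]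
          rw [h1c, ← ENNReal.ofReal_inv_of_pos hc1',
            ← ENNReal.ofReal_mul (inv_nonneg.mpr hc1'.le)]
          congr 1
          field_simp
  have hIoiIci : ∫⁻ t in Set.Ioi t₀, ENNReal.ofReal (F t)
      = ∫⁻ t in Set.Ici t₀, ENNReal.ofReal (F t) :=
    setLIntegral_congr Ioi_ae_eq_Ici
  -- integrability of F on Ioi t₀
  have hFmeas : AEStronglyMeasurable F (volume.restrict (Set.Ioi t₀)) :=
    hFc.aestronglyMeasurable.restrict
  have hFint : IntegrableOn F (Set.Ioi t₀) := by
    refine ⟨hFmeas, ?_⟩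
    rw [hasFiniteIntegral_iff_ofReal (Filter.Eventually.of_forall fun t => hFnn t)]
    rw [hIoiIci]
    exact lt_of_le_of_lt key ENNReal.ofReal_lt_top
  -- the upper bound
  have hup : (∫ τ in Set.Ioi t₀, F τ) ≤ T/(1-c) * F t₀ := by
    rw [integral_eq_lintegral_of_nonneg_ae
      (Filter.Eventually.of_forall fun t => hFnn t) hFmeas]
    exact ENNReal.toReal_le_of_le_ofReal
      (mul_nonneg (div_nonneg hT.le hc1'.le) (hFnn t₀)) (hIoiIci ▸ key)
  -- the lower bound
  have hgeq : (fun t => F t₀ * Real.exp (-(2*k)*(t - t₀)))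
      = fun t => (F t₀ * Real.exp (2*k*t₀)) * Real.exp (-(2*k) * t) := by
    funext t
    rw [mul_assoc, ← Real.exp_add]
    congr 2
    ring
  have hgint : IntegrableOn (fun t => F t₀ * Real.exp (-(2*k)*(t - t₀))) (Set.Ioi t₀) := by
    rw [hgeq]
    exact (exp_neg_integrableOn_Ioi t₀ hk2).const_mul _
  have hmono : (∫ t in Set.Ioi t₀, F t₀ * Real.exp (-(2*k)*(t - t₀)))
      ≤ ∫ τ in Set.Ioi t₀, F τ := by
    apply setIntegral_mono_on hgint hFint measurableSet_Ioi
    intro t ht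
    exact hlow t (le_of_lt ht)
  have hval : (∫ t in Set.Ioi t₀, F t₀ * Real.exp (-(2*k)*(t - t₀)))
      = F t₀ / (2*k) := by
    rw [hgeq]
    rw [MeasureTheory.integral_const_mul]
    have h2 : (∫ t in Set.Ioi t₀, Real.exp (-(2*k) * t))
        = (2*k)⁻¹ * Real.exp (-(2*k*t₀)) := by
      have h3 := integral_comp_mul_left_Ioi (fun x => Real.exp (-x)) t₀ hk2
      simp only [neg_mul] at h3 ⊢
      rw [h3, integral_exp_neg_Ioi, smul_eq_mul]
    rw [h2]
    have h4 : Real.exp (2*k*t₀) * Real.exp (-(2*k*t₀)) = 1 := by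
      rw [← Real.exp_add]; simp
    calc F t₀ * Real.exp (2*k*t₀) * ((2*k)⁻¹ * Real.exp (-(2*k*t₀)))
        = F t₀ * (2*k)⁻¹ * (Real.exp (2*k*t₀) * Real.exp (-(2*k*t₀))) := by ring
      _ = F t₀ / (2*k) := by rw [h4]; ring
  have hsqrt3 : (1:ℝ) ≤ Real.sqrt 3 := by
    rw [show (1:ℝ) = Real.sqrt 1 by simp]
    exact Real.sqrt_le_sqrt (by norm_num)
  have hsq3pos : (0:ℝ) < Real.sqrt 3 := by linarith
  constructor
  · have h1 : 1 / (2 * k * Real.sqrt 3) * F t₀ ≤ F t₀ / (2*k) := by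
      rw [div_eq_mul_inv (F t₀), mul_comm (F t₀)]
      apply mul_le_mul_of_nonneg_right _ (hFnn t₀)
      rw [one_div]
      apply inv_anti₀ hk2
      nlinarith
    calc 1 / (2 * k * Real.sqrt 3) * F t₀ ≤ F t₀ / (2*k) := h1
      _ = ∫ t in Set.Ioi t₀, F t₀ * Real.exp (-(2*k)*(t - t₀)) := hval.symm
      _ ≤ ∫ τ in Set.Ioi t₀, F τ := hmono
  · exact hup


end
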